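/- Let g : ℝ^{m×n} → ℝ be convex and differentiable, λ > 0, and d > min(m,n). Then every local minimizer of φ(A,B) = g(AᵀB) + (λ/2)(‖A‖_F² + ‖B‖_F²) over A ∈ ℝ^{d×m}, B ∈ ℝ^{d×n} is a global minimizer. -/

import Mathlib

open Matrix

attribute [local instance] Matrix.normedAddCommGroup Matrix.normedSpace

/-- Squared Frobenius norm of a real matrix. -/
noncomputable def frobNormSq {m n : Type*} [Fintype m] [Fintype n]
    (A : Matrix m n ℝ) : ℝ :=
  ∑ i, ∑ j, (A i j) ^ 2

/-- Frobenius inner product of two real matrices. -/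
noncomputable def ipFrob {m n : Type*} [Fintype m] [Fintype n]
    (P Q : Matrix m n ℝ) : ℝ :=
  ∑ i, ∑ j, P i j * Q i j

lemma ipFrob_self {m n : Type*} [Fintype m] [Fintype n] (P : Matrix m n ℝ) :
    ipFrob P P = frobNormSq P := by
  simp [ipFrob, frobNormSq, sq]

lemma frob_expand {a b : Type*} [Fintype a] [Fintype b] (P Q : Matrix a b ℝ) (t : ℝ) :
    frobNormSq (P + t • Q) = frobNormSq P + 2 * ipFrob P Q * t + frobNormSq Q * t ^ 2 := by
  have h : ∀ (i : a) (j : b), (P + t • Q) i j ^ 2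
      = P i j ^ 2 + (2 * t) * (P i j * Q i j) + t ^ 2 * Q i j ^ 2 := by
    intro i j; simp only [Matrix.add_apply, Matrix.smul_apply, smul_eq_mul]; ring
  simp only [frobNormSq, ipFrob, h, Finset.sum_add_distrib, ← Finset.mul_sum]
  ring

lemma convex_grad_ineq {E : Type*} [NormedAddCommGroup E] [NormedSpace ℝ E]
    {g : E → ℝ} (hconv : ConvexOn ℝ Set.univ g) {X Y : E} {L : E →L[ℝ] ℝ}
    (hL : HasFDerivAt g L X) : g X + L (Y - X) ≤ g Y := by
  have hh : ConvexOn ℝ Set.univ (g ∘ (AffineMap.lineMap X Y : ℝ →ᵃ[ℝ] E)) := by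
    simpa using hconv.comp_affineMap (AffineMap.lineMap X Y : ℝ →ᵃ[ℝ] E)
  have hc : HasDerivAt (fun t : ℝ => (AffineMap.lineMap X Y : ℝ →ᵃ[ℝ] E) t) (Y - X) (0 : ℝ) := by
    simp only [AffineMap.lineMap_apply, vsub_eq_sub, vadd_eq_add]
    simpa using ((hasDerivAt_id (0 : ℝ)).smul_const (Y - X)).add_const X
  have hLX : HasFDerivAt g L ((AffineMap.lineMap X Y : ℝ →ᵃ[ℝ] E) (0 : ℝ)) := by
    simpa using hL
  have hD : HasDerivAt (g ∘ (AffineMap.lineMap X Y : ℝ →ᵃ[ℝ] E)) (L (Y - X)) 0 :=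
    hLX.comp_hasDerivAt 0 hc
  have hs := hh.le_slope_of_hasDerivAt (Set.mem_univ (0 : ℝ)) (Set.mem_univ (1 : ℝ))
    zero_lt_one hD
  rw [slope_def_field] at hs
  simp only [Function.comp_apply, AffineMap.lineMap_apply_one, AffineMap.lineMap_apply_zero] at hs
  rw [map_sub] at hs ⊢
  norm_num at hs
  linarith

/-- If a real function has negative derivative at `0`, it is eventually smaller than its value
at `0` on the right. -/
lemma eventually_lt_of_deriv_neg {θ : ℝ → ℝ} {θ' : ℝ} (h : HasDerivAt θ θ' 0) (hneg : θ' < 0) :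
    ∀ᶠ r in nhdsWithin 0 (Set.Ioi 0), θ r < θ 0 := by
  have hslope := hasDerivAt_iff_tendsto_slope.mp h
  have h2 : ∀ᶠ r in nhdsWithin (0 : ℝ) {(0 : ℝ)}ᶜ, slope θ 0 r < 0 :=
    hslope.eventually (eventually_lt_nhds hneg)
  have hmono : nhdsWithin (0 : ℝ) (Set.Ioi 0) ≤ nhdsWithin (0 : ℝ) {(0 : ℝ)}ᶜ :=
    nhdsWithin_mono 0 (fun x hx => ne_of_gt hx)
  filter_upwards [h2.filter_mono hmono, self_mem_nhdsWithin] with r hr hr0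
  rw [slope_def_field] at hr
  have hrpos : (0 : ℝ) < r := hr0
  have := (div_neg_iff.mp (by simpa using hr))
  rcases this with ⟨_, h2'⟩ | ⟨h1', _⟩
  · linarith
  · linarith

set_option maxHeartbeats 1000000

theorem no_spurious_local_minimizers {d m n : ℕ} (hd : min m n < d)
    (g : Matrix (Fin m) (Fin n) ℝ → ℝ)
    (hconv : ConvexOn ℝ Set.univ g)
    (hg : Differentiable ℝ g)
    (lam : ℝ) (hlam : 0 < lam)
    (φ : Matrix (Fin d) (Fin m) ℝ × Matrix (Fin d) (Fin n) ℝ → ℝ)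
    (hφ : ∀ p, φ p = g (p.1ᵀ * p.2) + lam / 2 * (frobNormSq p.1 + frobNormSq p.2))
    (A : Matrix (Fin d) (Fin m) ℝ) (B : Matrix (Fin d) (Fin n) ℝ)
    (hloc : IsLocalMin φ (A, B)) :
    ∀ A' B', φ (A, B) ≤ φ (A', B') := by
  classical
  set X := Aᵀ * B with hX
  have hL : HasFDerivAt g (fderiv ℝ g X) X := (hg X).hasFDerivAt
  set L := fderiv ℝ g X with hLdef
  -- value of φ along straight lines
  have hval : ∀ (ΔA : Matrix (Fin d) (Fin m) ℝ) (ΔB : Matrix (Fin d) (Fin n) ℝ) (t : ℝ),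
      φ (A + t • ΔA, B + t • ΔB)
        = g (X + t • (ΔAᵀ * B + Aᵀ * ΔB) + (t * t) • (ΔAᵀ * ΔB))
          + lam / 2 * ((frobNormSq A + 2 * ipFrob A ΔA * t + frobNormSq ΔA * t ^ 2)
            + (frobNormSq B + 2 * ipFrob B ΔB * t + frobNormSq ΔB * t ^ 2)) := by
    intro ΔA ΔB t
    rw [hφ]
    dsimp only
    rw [frob_expand, frob_expand]
    have hm : (A + t • ΔA)ᵀ * (B + t • ΔB)
        = X + t • (ΔAᵀ * B + Aᵀ * ΔB) + (t * t) • (ΔAᵀ * ΔB) := by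
      simp only [Matrix.transpose_add, Matrix.transpose_smul, Matrix.add_mul, Matrix.mul_add,
        Matrix.smul_mul, Matrix.mul_smul, smul_add, smul_smul, hX]
      module
    rw [hm]
  -- first-order conditions
  have key1 : ∀ (ΔA : Matrix (Fin d) (Fin m) ℝ) (ΔB : Matrix (Fin d) (Fin n) ℝ),
      L (ΔAᵀ * B + Aᵀ * ΔB) + lam * (ipFrob A ΔA + ipFrob B ΔB) = 0 := by
    intro ΔA ΔB
    have hmin : IsLocalMin (fun t : ℝ => φ (A + t • ΔA, B + t • ΔB)) 0 := by
      have hcont : ContinuousAt (fun t : ℝ => (A + t • ΔA, B + t • ΔB)) 0 := by fun_prop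
      have hf : IsLocalMin φ ((fun t : ℝ => (A + t • ΔA, B + t • ΔB)) 0) := by
        simpa using hloc
      exact IsLocalMin.comp_continuous (g := fun t : ℝ => (A + t • ΔA, B + t • ΔB)) hf hcont
    -- derivative of the curve value
    have hc1 : HasDerivAt (fun t : ℝ =>
        g (X + t • (ΔAᵀ * B + Aᵀ * ΔB) + (t * t) • (ΔAᵀ * ΔB))) (L (ΔAᵀ * B + Aᵀ * ΔB)) 0 := by
      have h1 : HasDerivAt (fun t : ℝ => X + t • (ΔAᵀ * B + Aᵀ * ΔB) + (t * t) • (ΔAᵀ * ΔB))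
          (ΔAᵀ * B + Aᵀ * ΔB) 0 := by
        have ha : HasDerivAt (fun t : ℝ => t • (ΔAᵀ * B + Aᵀ * ΔB))
            ((1 : ℝ) • (ΔAᵀ * B + Aᵀ * ΔB)) 0 := (hasDerivAt_id 0).smul_const _
        have hid : HasDerivAt (fun t : ℝ => t) 1 0 := hasDerivAt_id 0
        have hb : HasDerivAt (fun t : ℝ => (t * t) • (ΔAᵀ * ΔB))
            ((1 * 0 + 0 * 1 : ℝ) • (ΔAᵀ * ΔB)) 0 :=
          (hid.mul hid).smul_const _
        have := (ha.const_add X).add hb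
        simp only [Pi.add_def, one_smul, mul_zero, zero_mul, add_zero, zero_smul] at this
        exact this
      have hLc : HasFDerivAt g L
          (X + (0 : ℝ) • (ΔAᵀ * B + Aᵀ * ΔB) + ((0 : ℝ) * 0) • (ΔAᵀ * ΔB)) := by
        simpa using hL
      exact hLc.comp_hasDerivAt 0 h1
    have hc2 : HasDerivAt (fun t : ℝ =>
        lam / 2 * ((frobNormSq A + 2 * ipFrob A ΔA * t + frobNormSq ΔA * t ^ 2)
          + (frobNormSq B + 2 * ipFrob B ΔB * t + frobNormSq ΔB * t ^ 2)))
        (lam * (ipFrob A ΔA + ipFrob B ΔB)) 0 := by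
      have hp : HasDerivAt (fun t : ℝ =>
          (frobNormSq A + 2 * ipFrob A ΔA * t + frobNormSq ΔA * t ^ 2)
            + (frobNormSq B + 2 * ipFrob B ΔB * t + frobNormSq ΔB * t ^ 2))
          (2 * ipFrob A ΔA + 2 * ipFrob B ΔB) 0 := by
        have hsq : HasDerivAt (fun t : ℝ => t ^ 2) ((2 : ℕ) * (0 : ℝ) ^ 1) 0 := hasDerivAt_pow 2 0
        have hid := hasDerivAt_id (0 : ℝ)
        have h1 : HasDerivAt (fun t : ℝ =>
            frobNormSq A + 2 * ipFrob A ΔA * t + frobNormSq ΔA * t ^ 2)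
            (2 * ipFrob A ΔA * 1 + frobNormSq ΔA * ((2 : ℕ) * (0 : ℝ) ^ 1)) 0 :=
          ((hid.const_mul (2 * ipFrob A ΔA)).const_add (frobNormSq A)).add
            (hsq.const_mul (frobNormSq ΔA))
        have h2 : HasDerivAt (fun t : ℝ =>
            frobNormSq B + 2 * ipFrob B ΔB * t + frobNormSq ΔB * t ^ 2)
            (2 * ipFrob B ΔB * 1 + frobNormSq ΔB * ((2 : ℕ) * (0 : ℝ) ^ 1)) 0 :=
          ((hid.const_mul (2 * ipFrob B ΔB)).const_add (frobNormSq B)).add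
            (hsq.const_mul (frobNormSq ΔB))
        have := h1.add h2
        simp only [Pi.add_def] at this
        refine this.congr_deriv ?_
        push_cast
        ring
      have := hp.const_mul (lam / 2)
      refine this.congr_deriv ?_
      ring
    have htotal : HasDerivAt (fun t : ℝ => φ (A + t • ΔA, B + t • ΔB))
        (L (ΔAᵀ * B + Aᵀ * ΔB) + lam * (ipFrob A ΔA + ipFrob B ΔB)) 0 := by
      have := hc1.add hc2
      refine HasDerivAt.congr_of_eventuallyEq this ?_
      filter_upwards with t
      rw [hval]
      rfl
    exact hmin.hasDerivAt_eq_zero htotal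
  have e1 : ∀ ΔA : Matrix (Fin d) (Fin m) ℝ, L (ΔAᵀ * B) = -(lam * ipFrob A ΔA) := by
    intro ΔA
    have := key1 ΔA 0
    simp only [Matrix.mul_zero, add_zero, ipFrob, Matrix.zero_apply, mul_zero,
      Finset.sum_const_zero] at this
    simp only [ipFrob]
    linarith
  have e2 : ∀ ΔB : Matrix (Fin d) (Fin n) ℝ, L (Aᵀ * ΔB) = -(lam * ipFrob B ΔB) := by
    intro ΔB
    have := key1 0 ΔB
    simp only [Matrix.transpose_zero, Matrix.zero_mul, zero_add, ipFrob, Matrix.zero_apply,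
      mul_zero, Finset.sum_const_zero] at this
    simp only [ipFrob]
    linarith
  have eLX1 : L X = -(lam * frobNormSq A) := by
    have := e1 A; rwa [← hX, ipFrob_self] at this
  have eLX2 : L X = -(lam * frobNormSq B) := by
    have := e2 B; rwa [← hX, ipFrob_self] at this
  -- implication between kernels via first-order conditions
  have himp1 : ∀ w : Fin d → ℝ, (∀ k, ∑ i, w i * A i k = 0) → ∀ l, ∑ i, w i * B i l = 0 := by
    intro w hwA l
    set ΔB : Matrix (Fin d) (Fin n) ℝ := Matrix.of fun i l' => w i * (if l' = l then 1 else 0)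
      with hΔB
    have hAΔB : Aᵀ * ΔB = 0 := by
      ext k l'
      by_cases h : l' = l
      · have he : ∀ i, Aᵀ k i * ΔB i l' = w i * A i k := by
          intro i
          simp only [hΔB, Matrix.transpose_apply, Matrix.of_apply, h, eq_self_iff_true,
            if_true, mul_one]
          exact mul_comm _ _
        rw [Matrix.mul_apply]
        simp only [he]
        rw [hwA k, Matrix.zero_apply]
      · simp [Matrix.mul_apply, hΔB, h]
    have h2 := e2 ΔB
    rw [hAΔB, map_zero] at h2
    have hip : ipFrob B ΔB = 0 := by
      have hlam' := hlam.ne'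
      have : lam * ipFrob B ΔB = 0 := by linarith
      rcases mul_eq_zero.mp this with h | h
      · exact absurd h hlam'
      · exact h
    have hipval : ipFrob B ΔB = ∑ i, w i * B i l := by
      simp only [ipFrob, hΔB, Matrix.of_apply, mul_ite, mul_one, mul_zero,
        Finset.sum_ite_eq', Finset.mem_univ, if_true]
      exact Finset.sum_congr rfl fun i _ => by ring
    rw [hipval] at hip
    exact hip
  have himp2 : ∀ w : Fin d → ℝ, (∀ l, ∑ i, w i * B i l = 0) → ∀ k, ∑ i, w i * A i k = 0 := by
    intro w hwB k
    set ΔA : Matrix (Fin d) (Fin m) ℝ := Matrix.of fun i k' => w i * (if k' = k then 1 else 0)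
      with hΔA
    have hΔAB : ΔAᵀ * B = 0 := by
      ext k' l
      by_cases h : k' = k
      · have he : ∀ i, ΔAᵀ k' i * B i l = w i * B i l := by
          intro i
          simp only [hΔA, Matrix.transpose_apply, Matrix.of_apply, h, eq_self_iff_true,
            if_true, mul_one]
        rw [Matrix.mul_apply]
        simp only [he]
        rw [hwB l, Matrix.zero_apply]
      · simp [Matrix.mul_apply, hΔA, h]
    have h1 := e1 ΔA
    rw [hΔAB, map_zero] at h1
    have hip : ipFrob A ΔA = 0 := by
      have : lam * ipFrob A ΔA = 0 := by linarith
      rcases mul_eq_zero.mp this with h | h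
      · exact absurd h hlam.ne'
      · exact h
    have hipval : ipFrob A ΔA = ∑ i, w i * A i k := by
      simp only [ipFrob, hΔA, Matrix.of_apply, mul_ite, mul_one, mul_zero,
        Finset.sum_ite_eq', Finset.mem_univ, if_true]
      exact Finset.sum_congr rfl fun i _ => by ring
    rw [hipval] at hip
    exact hip
  -- existence of a common left-kernel direction
  have hw : ∃ w : Fin d → ℝ, w ≠ 0 ∧ (∀ k, ∑ i, w i * A i k = 0)
      ∧ (∀ l, ∑ i, w i * B i l = 0) := by
    rcases le_or_gt m n with hmn | hmn
    · have hmd : m < d := by omega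
      have hni : ¬ Function.Injective A.vecMulLinear := by
        intro hinj
        have := LinearMap.finrank_le_finrank_of_injective hinj
        simp [Module.finrank_pi] at this
        omega
      obtain ⟨x, y, hxy, hne⟩ := Function.not_injective_iff.mp hni
      refine ⟨x - y, sub_ne_zero.mpr hne, ?_, ?_⟩
      · intro k
        have : A.vecMulLinear (x - y) = 0 := by rw [map_sub, hxy, sub_self]
        have hk := congrFun this k
        simpa [Matrix.vecMulLinear_apply, Matrix.vecMul, dotProduct, sub_mul, Finset.sum_sub_distrib] using hk
      · apply himp1
        intro k
        have : A.vecMulLinear (x - y) = 0 := by rw [map_sub, hxy, sub_self]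
        have hk := congrFun this k
        simpa [Matrix.vecMulLinear_apply, Matrix.vecMul, dotProduct, sub_mul, Finset.sum_sub_distrib] using hk
    · have hnd : n < d := by omega
      have hni : ¬ Function.Injective B.vecMulLinear := by
        intro hinj
        have := LinearMap.finrank_le_finrank_of_injective hinj
        simp [Module.finrank_pi] at this
        omega
      obtain ⟨x, y, hxy, hne⟩ := Function.not_injective_iff.mp hni
      have hB0 : ∀ l, ∑ i, (x - y) i * B i l = 0 := by
        intro l
        have : B.vecMulLinear (x - y) = 0 := by rw [map_sub, hxy, sub_self]
        have hl := congrFun this l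
        simpa [Matrix.vecMulLinear_apply, Matrix.vecMul, dotProduct, sub_mul, Finset.sum_sub_distrib] using hl
      exact ⟨x - y, sub_ne_zero.mpr hne, himp2 _ hB0, hB0⟩
  obtain ⟨w, hw0, hwA, hwB⟩ := hw
  have hs : (0 : ℝ) < ∑ i, w i ^ 2 := by
    obtain ⟨i0, hi0⟩ := Function.ne_iff.mp hw0
    refine Finset.sum_pos' (fun i _ => sq_nonneg _) ⟨i0, Finset.mem_univ _, ?_⟩
    exact lt_of_le_of_ne (sq_nonneg _) (Ne.symm (pow_ne_zero 2 hi0))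
  set s : ℝ := ∑ i, w i ^ 2 with hsdef
  -- the curve step: bound on L of rank-one matrices
  have key2 : ∀ (u : Fin m → ℝ) (v : Fin n → ℝ),
      L (Matrix.of fun k l => u k * v l) ≤ lam / 2 * (∑ k, u k ^ 2 + ∑ l, v l ^ 2) := by
    intro u v
    set M : Matrix (Fin m) (Fin n) ℝ := Matrix.of fun k l => u k * v l with hM
    set ΔA : Matrix (Fin d) (Fin m) ℝ := Matrix.of fun i k => w i * u k with hΔA
    set ΔB : Matrix (Fin d) (Fin n) ℝ := Matrix.of fun i l => -(w i * v l) with hΔB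
    -- needed matrix computations
    have hc1 : ΔAᵀ * B = 0 := by
      ext k l
      simp only [Matrix.mul_apply, Matrix.transpose_apply, hΔA, Matrix.of_apply,
        Matrix.zero_apply]
      calc ∑ i, w i * u k * B i l = u k * ∑ i, w i * B i l := by
            rw [Finset.mul_sum]; exact Finset.sum_congr rfl fun i _ => by ring
      _ = 0 := by rw [hwB l, mul_zero]
    have hc2 : Aᵀ * ΔB = 0 := by
      ext k l
      simp only [Matrix.mul_apply, Matrix.transpose_apply, hΔB, Matrix.of_apply,
        Matrix.zero_apply]
      calc ∑ i, A i k * -(w i * v l) = -(v l * ∑ i, w i * A i k) := by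
            rw [Finset.mul_sum, ← Finset.sum_neg_distrib]
            exact Finset.sum_congr rfl fun i _ => by ring
      _ = 0 := by rw [hwA k, mul_zero, neg_zero]
    have hc3 : ΔAᵀ * ΔB = -(s • M) := by
      ext k l
      simp only [Matrix.mul_apply, Matrix.transpose_apply, hΔA, hΔB, hM, Matrix.of_apply,
        Matrix.neg_apply, Matrix.smul_apply, smul_eq_mul, hsdef]
      rw [Finset.sum_mul, ← Finset.sum_neg_distrib]
      exact Finset.sum_congr rfl fun i _ => by ring
    have hip1 : ipFrob A ΔA = 0 := by
      simp only [ipFrob, hΔA, Matrix.of_apply]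
      calc ∑ i, ∑ k, A i k * (w i * u k) = ∑ k, u k * ∑ i, w i * A i k := by
            rw [Finset.sum_comm]
            exact Finset.sum_congr rfl fun k _ => by
              rw [Finset.mul_sum]; exact Finset.sum_congr rfl fun i _ => by ring
      _ = 0 := by
            refine Finset.sum_eq_zero fun k _ => ?_
            rw [hwA k, mul_zero]
    have hip2 : ipFrob B ΔB = 0 := by
      simp only [ipFrob, hΔB, Matrix.of_apply]
      calc ∑ i, ∑ l, B i l * -(w i * v l) = ∑ l, -(v l * ∑ i, w i * B i l) := by
            rw [Finset.sum_comm]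
            exact Finset.sum_congr rfl fun l _ => by
              rw [Finset.mul_sum, ← Finset.sum_neg_distrib]
              exact Finset.sum_congr rfl fun i _ => by ring
      _ = 0 := by
            refine Finset.sum_eq_zero fun l _ => ?_
            rw [hwB l, mul_zero, neg_zero]
    have hf1 : frobNormSq ΔA = s * ∑ k, u k ^ 2 := by
      simp only [frobNormSq, hΔA, Matrix.of_apply, hsdef]
      rw [Finset.sum_mul]
      refine Finset.sum_congr rfl fun i _ => ?_
      rw [Finset.mul_sum]
      exact Finset.sum_congr rfl fun k _ => by ring
    have hf2 : frobNormSq ΔB = s * ∑ l, v l ^ 2 := by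
      simp only [frobNormSq, hΔB, Matrix.of_apply, hsdef]
      rw [Finset.sum_mul]
      refine Finset.sum_congr rfl fun i _ => ?_
      rw [Finset.mul_sum]
      exact Finset.sum_congr rfl fun l _ => by ring
    -- the one-dimensional function θ
    set c : ℝ := lam / 2 * (∑ k, u k ^ 2 + ∑ l, v l ^ 2) with hc
    set θ : ℝ → ℝ := fun r => g (X - r • M) + lam / 2 * (frobNormSq A + frobNormSq B) + c * r
      with hθ
    have hψθ : ∀ t : ℝ, φ (A + t • ΔA, B + t • ΔB) = θ (s * t ^ 2) := by
      intro t
      rw [hval, hc1, hc2, hc3, hip1, hip2, hf1, hf2, hθ]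
      dsimp only
      have hmat : X + t • ((0 : Matrix (Fin m) (Fin n) ℝ) + 0) + (t * t) • (-(s • M))
          = X - (s * t ^ 2) • M := by
        rw [add_zero, smul_zero, add_zero, smul_neg, smul_smul, sub_eq_add_neg]
        ring_nf
      rw [hmat]
      ring
    -- θ has derivative -(L M) + c at 0
    have hθD : HasDerivAt θ (-(L M) + c) 0 := by
      have hcurve : HasDerivAt (fun r : ℝ => X - r • M) (-M) 0 := by
        have := ((hasDerivAt_id (0 : ℝ)).smul_const M).const_add X
        have h2 : HasDerivAt (fun r : ℝ => X + r • (-M)) ((1 : ℝ) • (-M)) 0 := by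
          exact ((hasDerivAt_id (0 : ℝ)).smul_const (-M)).const_add X
        have h3 : (fun r : ℝ => X + r • (-M)) = fun r : ℝ => X - r • M := by
          funext r; rw [smul_neg, sub_eq_add_neg]
        rw [h3] at h2
        simpa using h2
      have hLc : HasFDerivAt g L (X - (0 : ℝ) • M) := by simpa using hL
      have hg1 : HasDerivAt (fun r : ℝ => g (X - r • M)) (L (-M)) 0 :=
        hLc.comp_hasDerivAt 0 hcurve
      have h2 := (hg1.add_const (lam / 2 * (frobNormSq A + frobNormSq B))).add
        ((hasDerivAt_id (0 : ℝ)).const_mul c)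
      rw [hθ]
      simpa [Pi.add_def] using h2
    -- local minimality along the curve
    have hmin : IsLocalMin (fun t : ℝ => φ (A + t • ΔA, B + t • ΔB)) 0 := by
      have hcont : ContinuousAt (fun t : ℝ => (A + t • ΔA, B + t • ΔB)) 0 := by fun_prop
      have hf : IsLocalMin φ ((fun t : ℝ => (A + t • ΔA, B + t • ΔB)) 0) := by
        simpa using hloc
      exact IsLocalMin.comp_continuous (g := fun t : ℝ => (A + t • ΔA, B + t • ΔB)) hf hcont
    -- conclude nonnegativity of the derivative of θ at 0 from the right
    by_contra hlt
    push_neg at hlt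
    have hDneg : -(L M) + c < 0 := by
      have : L M > c := by
        simpa [hc] using hlt
      linarith
    have hev := eventually_lt_of_deriv_neg hθD hDneg
    have htend : Filter.Tendsto (fun t : ℝ => s * t ^ 2)
        (nhdsWithin 0 (Set.Ioi 0)) (nhdsWithin 0 (Set.Ioi 0)) := by
      rw [tendsto_nhdsWithin_iff]
      constructor
      · have h1 : Filter.Tendsto (fun t : ℝ => s * t ^ 2) (nhds 0) (nhds (s * 0 ^ 2)) :=
          (continuous_const.mul (continuous_pow 2)).tendsto 0
        simpa using h1.mono_left nhdsWithin_le_nhds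
      · filter_upwards [self_mem_nhdsWithin] with t ht
        have htpos : (0 : ℝ) < t := ht
        have : (0 : ℝ) < s * t ^ 2 := by positivity
        exact this
    have hev2 : ∀ᶠ t in nhdsWithin (0 : ℝ) (Set.Ioi 0), θ (s * t ^ 2) < θ 0 :=
      htend.eventually hev
    have hev3 : ∀ᶠ t in nhdsWithin (0 : ℝ) (Set.Ioi 0),
        (fun t : ℝ => φ (A + t • ΔA, B + t • ΔB)) 0 ≤ φ (A + t • ΔA, B + t • ΔB) :=
      hmin.filter_mono nhdsWithin_le_nhds
    have hne : (nhdsWithin (0 : ℝ) (Set.Ioi 0)).NeBot := nhdsGT_neBot 0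
    obtain ⟨t, ht2, ht3⟩ := (hev2.and hev3).exists
    have hθ0 : (fun t : ℝ => φ (A + t • ΔA, B + t • ΔB)) 0 = θ 0 := by
      have := hψθ 0
      simpa using this
    rw [hθ0, hψθ t] at ht3
    exact absurd (lt_of_le_of_lt ht3 ht2) (lt_irrefl _)
  -- lower bound for L on products
  intro A' B'
  have key4 : -(lam / 2 * (frobNormSq A' + frobNormSq B')) ≤ L (A'ᵀ * B') := by
    have hdecomp : A'ᵀ * B' = ∑ i : Fin d, (Matrix.of fun k l => A' i k * B' i l) := by
      ext k l
      simp [Matrix.mul_apply, Matrix.sum_apply]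
    rw [hdecomp, map_sum]
    have hterm : ∀ i : Fin d, -(lam / 2 * (∑ k, A' i k ^ 2 + ∑ l, B' i l ^ 2))
        ≤ L (Matrix.of fun k l => A' i k * B' i l) := by
      intro i
      have := key2 (fun k => -(A' i k)) (B' i)
      have hneg : (Matrix.of fun k l => -(A' i k) * B' i l)
          = -(Matrix.of fun k l => A' i k * B' i l) := by
        ext k l; simp
      rw [hneg, map_neg] at this
      simp only [neg_sq] at this
      linarith
    calc -(lam / 2 * (frobNormSq A' + frobNormSq B'))
        = ∑ i : Fin d, -(lam / 2 * (∑ k, A' i k ^ 2 + ∑ l, B' i l ^ 2)) := by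
          have hsum : ∑ i : Fin d, (lam / 2 * (∑ k, A' i k ^ 2 + ∑ l, B' i l ^ 2))
              = lam / 2 * (frobNormSq A' + frobNormSq B') := by
            rw [← Finset.mul_sum, Finset.sum_add_distrib]
            simp [frobNormSq]
          rw [← hsum, ← Finset.sum_neg_distrib]
    _ ≤ ∑ i : Fin d, L (Matrix.of fun k l => A' i k * B' i l) :=
      Finset.sum_le_sum fun i _ => hterm i
  -- convexity inequality
  have hconvi : g X + L (A'ᵀ * B' - X) ≤ g (A'ᵀ * B') := convex_grad_ineq hconv hL
  rw [map_sub] at hconvi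
  -- put everything together
  rw [hφ (A, B), hφ (A', B')]
  dsimp only
  rw [← hX]
  have hA2 : lam * frobNormSq A = -(L X) := by rw [eLX1]; ring
  have hB2 : lam * frobNormSq B = -(L X) := by rw [eLX2]; ring
  have h1 : lam / 2 * (frobNormSq A + frobNormSq B) = -(L X) := by
    have hsplit : lam / 2 * (frobNormSq A + frobNormSq B)
        = (lam * frobNormSq A + lam * frobNormSq B) / 2 := by ring
    rw [hsplit, hA2, hB2]
    ring
  linarith [key4, hconvi, h1]
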